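/- Let n and r be positive integers. For every natural number k, Σ_{F ⊆ {1,…,n}} (−1)^{n−|F|} · N_F(k) equals the number of words w ∈ S(n,r) with exactly k ascents, where N_F(k) denotes the number of words w = (w_0, w_1, …, w_n) ∈ {0,1,…,r−1}^{n+1} satisfying w_0 = w_n = 0, w_{i−1} = w_i for every i ∈ {1,…,n} \ F, and having exactly k ascents. -/

import Mathlib

open scoped Classical

noncomputable section

/-- Value of a word `w : Fin (n+1) → ℕ` at a natural index (junk value `0` out of range). -/
def wv {n : ℕ} (w : Fin (n + 1) → ℕ) (k : ℕ) : ℕ :=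
  if h : k < n + 1 then w ⟨k, h⟩ else 0

/-- The number of ascents of a word `w = (w_0, w_1, …, w_n)`, i.e. the number of indices
`i ∈ {0,…,n-1}` with `w_i < w_{i+1}`. -/
def asc {n : ℕ} (w : Fin (n + 1) → ℕ) : ℕ :=
  ((Finset.range n).filter fun i => wv w i < wv w (i + 1)).card

/-- The set `S(n,r)` of Smirnov words `w = (w_0, …, w_n) ∈ {0,…,r-1}^{n+1}` with
`w_0 = w_n = 0` and no two consecutive entries equal. -/
def smirnov (n r : ℕ) : Finset (Fin (n + 1) → ℕ) :=
  (Fintype.piFinset fun _ => Finset.range r).filter fun w =>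
    wv w 0 = 0 ∧ wv w n = 0 ∧ ∀ i < n, wv w i ≠ wv w (i + 1)

/-- `k ∈ {1,…,n-1}` is a double ascent of `w` if `w_{k-1} < w_k < w_{k+1}`. -/
def doubleAscent {n : ℕ} (w : Fin (n + 1) → ℕ) (k : ℕ) : Prop :=
  1 ≤ k ∧ k < n ∧ wv w (k - 1) < wv w k ∧ wv w k < wv w (k + 1)

/-- `k ∈ {1,…,n-1}` is a double descent of `w` if `w_{k-1} > w_k > w_{k+1}`. -/
def doubleDescent {n : ℕ} (w : Fin (n + 1) → ℕ) (k : ℕ) : Prop :=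
  1 ≤ k ∧ k < n ∧ wv w k < wv w (k - 1) ∧ wv w (k + 1) < wv w k

/-- `w` has the matching property: for every double ascent `k` of `w` there is a double
descent `ℓ > k` with `w_k = w_ℓ` and `w_k ≤ w_j` for all `k < j < ℓ`. -/
def hasMatching {n : ℕ} (w : Fin (n + 1) → ℕ) : Prop :=
  ∀ k, doubleAscent w k →
    ∃ l, k < l ∧ doubleDescent w l ∧ wv w k = wv w l ∧
      ∀ j, k < j → j < l → wv w k ≤ wv w j


open Finset

lemma aux_compl (T : Finset ℕ) :
    ∑ G ∈ T.powerset, ((-1 : ℤ)) ^ (T.card - G.card) = if T = ∅ then 1 else 0 := by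
  rw [← Finset.sum_powerset_neg_one_pow_card (x := T)]
  refine Finset.sum_nbij' (fun G => T \ G) (fun G => T \ G) ?_ ?_ ?_ ?_ ?_
  · intro G hG; simp only [mem_powerset] at *; exact sdiff_subset
  · intro G hG; simp only [mem_powerset] at *; exact sdiff_subset
  · intro G hG; simp only [mem_powerset] at hG; exact Finset.sdiff_sdiff_eq_self hG
  · intro G hG; simp only [mem_powerset] at hG; exact Finset.sdiff_sdiff_eq_self hG
  · intro G hG; simp only [mem_powerset] at hG
    rw [Finset.card_sdiff_of_subset hG]

lemma aux_ie (S D : Finset ℕ) (hD : D ⊆ S) :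
    ∑ F ∈ S.powerset, (if D ⊆ F then ((-1 : ℤ) ^ (S.card - F.card)) else 0)
      = if D = S then 1 else 0 := by
  rw [← Finset.sum_filter]
  have h1 : ∑ F ∈ S.powerset.filter (fun F => D ⊆ F), ((-1 : ℤ) ^ (S.card - F.card))
      = ∑ G ∈ (S \ D).powerset, ((-1 : ℤ) ^ ((S \ D).card - G.card)) := by
    refine (Finset.sum_nbij' (fun F => F \ D) (fun G => G ∪ D) ?_ ?_ ?_ ?_ ?_).symm.symm
    · intro F hF
      simp only [mem_filter, mem_powerset] at hF
      simp only [mem_powerset]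
      exact sdiff_subset_sdiff hF.1 (le_refl D)
    · intro G hG
      simp only [mem_powerset] at hG
      simp only [mem_filter, mem_powerset]
      constructor
      · exact union_subset (hG.trans sdiff_subset) hD
      · exact subset_union_right
    · intro F hF
      simp only [mem_filter, mem_powerset] at hF
      exact sdiff_union_of_subset hF.2
    · intro G hG
      simp only [mem_powerset] at hG
      have hdisj : Disjoint G D := disjoint_of_subset_left hG sdiff_disjoint
      rw [union_sdiff_right, sdiff_eq_self_of_disjoint hdisj]
    · intro F hF
      simp only [mem_filter, mem_powerset] at hF
      congr 1
      have h1 : F.card ≤ S.card := card_le_card hF.1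
      have h2 : D.card ≤ F.card := card_le_card hF.2
      rw [card_sdiff_of_subset hD, card_sdiff_of_subset hF.2]
      omega
  rw [h1, aux_compl]
  congr 1
  simp only [eq_iff_iff]
  rw [sdiff_eq_empty_iff_subset]
  constructor
  · intro h; exact subset_antisymm hD h
  · intro h; exact h ▸ (le_refl _)

lemma shift_iff {n : ℕ} (w : Fin (n + 1) → ℕ) :
    (∀ i ∈ Finset.Icc 1 n, wv w (i - 1) ≠ wv w i) ↔ (∀ i < n, wv w i ≠ wv w (i + 1)) := by
  constructor
  · intro h i hi
    have := h (i + 1) (by simp [Finset.mem_Icc]; omega)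
    simpa using this
  · intro h i hi
    simp only [Finset.mem_Icc] at hi
    have := h (i - 1) (by omega)
    have he : i - 1 + 1 = i := by omega
    rwa [he] at this


lemma filter_inst_eq {α : Type*} (q : α → Prop) (h1 : DecidablePred q) (s : Finset α)
    [h2 : DecidablePred q] : @Finset.filter _ q h1 s = @Finset.filter _ q h2 s := by
  congr 1

set_option maxHeartbeats 2000000 in
lemma main_aux (n r k : ℕ)
    (D1 : ∀ F : Finset ℕ, DecidablePred fun w : Fin (n + 1) → ℕ =>
      wv w 0 = 0 ∧ wv w n = 0 ∧
        (∀ i ∈ Finset.Icc 1 n, i ∉ F → wv w (i - 1) = wv w i) ∧ asc w = k)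
    (D2 : DecidablePred fun w : Fin (n + 1) → ℕ => asc w = k) :
    ∑ F ∈ (Finset.Icc 1 n).powerset,
        (-1 : ℤ) ^ (n - F.card) *
          ((@Finset.filter _ _ (D1 F)
              (Fintype.piFinset fun _ : Fin (n + 1) => Finset.range r)).card : ℤ) =
      ((@Finset.filter _ _ D2 (smirnov n r)).card : ℤ) := by
  rw [filter_inst_eq _ D2]
  refine Eq.trans (b := ∑ F ∈ (Finset.Icc 1 n).powerset,
      (-1 : ℤ) ^ (n - F.card) *
        (((Fintype.piFinset fun _ : Fin (n + 1) => Finset.range r).filter fun w =>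
            wv w 0 = 0 ∧ wv w n = 0 ∧
              (∀ i ∈ Finset.Icc 1 n, i ∉ F → wv w (i - 1) = wv w i) ∧
              asc w = k).card : ℤ)) (Finset.sum_congr rfl fun F hF => by
        rw [filter_inst_eq _ (D1 F)]) ?_
  have hScard : (Finset.Icc 1 n).card = n := by rw [Nat.card_Icc]; omega
  calc
    ∑ F ∈ (Finset.Icc 1 n).powerset, (-1 : ℤ) ^ (n - F.card) *
          (((Fintype.piFinset fun _ : Fin (n + 1) => Finset.range r).filter fun w => wv w 0 = 0 ∧ wv w n = 0 ∧
              (∀ i ∈ (Finset.Icc 1 n), i ∉ F → wv w (i - 1) = wv w i) ∧ asc w = k).card : ℤ)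
      = ∑ F ∈ (Finset.Icc 1 n).powerset, ∑ w ∈ (Fintype.piFinset fun _ : Fin (n + 1) => Finset.range r),
          (if wv w 0 = 0 ∧ wv w n = 0 ∧ (∀ i ∈ (Finset.Icc 1 n), i ∉ F → wv w (i - 1) = wv w i) ∧ asc w = k
            then (-1 : ℤ) ^ (n - F.card) else 0) := by
        refine Finset.sum_congr rfl fun F hF => ?_
        rw [Finset.card_filter]
        push_cast
        rw [Finset.mul_sum]
        refine Finset.sum_congr rfl fun w hw => ?_
        simp [mul_ite]
    _ = ∑ w ∈ (Fintype.piFinset fun _ : Fin (n + 1) => Finset.range r), ∑ F ∈ (Finset.Icc 1 n).powerset,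
          (if wv w 0 = 0 ∧ wv w n = 0 ∧ (∀ i ∈ (Finset.Icc 1 n), i ∉ F → wv w (i - 1) = wv w i) ∧ asc w = k
            then (-1 : ℤ) ^ (n - F.card) else 0) := Finset.sum_comm
    _ = ∑ w ∈ (Fintype.piFinset fun _ : Fin (n + 1) => Finset.range r),
          (if wv w 0 = 0 ∧ wv w n = 0 ∧ (∀ i < n, wv w i ≠ wv w (i + 1)) ∧ asc w = k
            then (1 : ℤ) else 0) := by
        refine Finset.sum_congr rfl fun w hw => ?_
        by_cases hP : wv w 0 = 0 ∧ wv w n = 0 ∧ asc w = k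
        · set D := (Finset.Icc 1 n).filter (fun i => wv w (i - 1) ≠ wv w i) with hDdef
          have hDS : D ⊆ (Finset.Icc 1 n) := Finset.filter_subset _ _
          have hstep : ∀ F ∈ (Finset.Icc 1 n).powerset,
              (if wv w 0 = 0 ∧ wv w n = 0 ∧ (∀ i ∈ (Finset.Icc 1 n), i ∉ F → wv w (i - 1) = wv w i) ∧ asc w = k
                then (-1 : ℤ) ^ (n - F.card) else 0)
              = (if D ⊆ F then (-1 : ℤ) ^ ((Finset.Icc 1 n).card - F.card) else 0) := by
            intro F hF
            rw [hScard]
            refine if_congr ?_ rfl rfl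
            constructor
            · rintro ⟨-, -, h, -⟩ i hi
              simp only [hDdef, Finset.mem_filter] at hi
              by_contra hiF
              exact hi.2 (h i hi.1 hiF)
            · intro h
              refine ⟨hP.1, hP.2.1, fun i hi hiF => ?_, hP.2.2⟩
              by_contra hne
              exact hiF (h (by simp [hDdef, Finset.mem_filter, hi, hne]))
          rw [Finset.sum_congr rfl hstep, aux_ie (Finset.Icc 1 n) D hDS]
          refine if_congr ?_ rfl rfl
          rw [← shift_iff w]
          constructor
          · intro h
            refine ⟨hP.1, hP.2.1, fun i hi => ?_, hP.2.2⟩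
            have : i ∈ D := h ▸ hi
            simp only [hDdef, Finset.mem_filter] at this
            exact this.2
          · rintro ⟨-, -, h, -⟩
            refine Finset.Subset.antisymm hDS fun i hi => ?_
            simp [hDdef, Finset.mem_filter, hi, h i hi]
        · rw [Finset.sum_eq_zero, if_neg (by tauto)]
          intro F hF
          rw [if_neg (by tauto)]
    _ = (((smirnov n r).filter fun w => asc w = k).card : ℤ) := by
        rw [smirnov, Finset.filter_filter, Finset.card_filter]
        push_cast
        refine Finset.sum_congr rfl fun w hw => ?_
        refine if_congr ?_ rfl rfl
        tauto

/-- Inclusion–exclusion: `Σ_{F ⊆ {1,…,n}} (-1)^{n-|F|} N_F(k)` equals the number of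
Smirnov words `w ∈ S(n,r)` with exactly `k` ascents, where `N_F(k)` counts the words
`w = (w_0,…,w_n) ∈ {0,…,r-1}^{n+1}` with `w_0 = w_n = 0`, `w_{i-1} = w_i` for all
`i ∈ {1,…,n} \ F`, and exactly `k` ascents. -/
theorem inclusion_exclusion_smirnov (n r : ℕ) (hn : 0 < n) (hr : 0 < r) (k : ℕ) :
    ∑ F ∈ (Finset.Icc 1 n).powerset,
        (-1 : ℤ) ^ (n - F.card) *
          (((Fintype.piFinset fun _ : Fin (n + 1) => Finset.range r).filter fun w =>
              wv w 0 = 0 ∧ wv w n = 0 ∧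
                (∀ i ∈ Finset.Icc 1 n, i ∉ F → wv w (i - 1) = wv w i) ∧
                asc w = k).card : ℤ) =
      (((smirnov n r).filter fun w => asc w = k).card : ℤ) :=
  main_aux n r k _ _
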